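/- Let f be continuous on ℝ, f ≥ 0 on (0,∞), F(s) = ∫₀^s f, and let u : ℝᴺ → (0,∞). Let H be a closed half-space. If F(u)^H = F(u) everywhere (i.e., polarization leaves F∘u unchanged), then f(u^H) = f(u) everywhere on ℝᴺ. -/

import Mathlib

open Set

private lemma aux_zero (f : ℝ → ℝ) (hfc : Continuous f) (hf : ∀ s : ℝ, 0 < s → 0 ≤ f s)
    (a b : ℝ) (ha : 0 < a) (hab : a < b) (hint : ∫ x in a..b, f x = 0) :
    ∀ y ∈ Set.Icc a b, f y = 0 := by
  have hIoo : ∀ y ∈ Set.Ioo a b, f y = 0 := by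
    intro y hy
    by_contra hne
    have hy0 : 0 < y := ha.trans hy.1
    have hpos : 0 < f y := lt_of_le_of_ne (hf y hy0) (Ne.symm hne)
    have hopen : IsOpen ({z | 0 < f z} ∩ Set.Ioo a b) :=
      (isOpen_lt continuous_const hfc).inter isOpen_Ioo
    have hmem : y ∈ {z | 0 < f z} ∩ Set.Ioo a b := ⟨hpos, hy⟩
    have hsub : {z | 0 < f z} ∩ Set.Ioo a b ⊆ Function.support f ∩ Set.Ioc a b := by
      rintro z ⟨hz1, hz2⟩
      exact ⟨ne_of_gt hz1, hz2.1, hz2.2.le⟩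
    have hmeas : 0 < MeasureTheory.volume (Function.support f ∩ Set.Ioc a b) :=
      lt_of_lt_of_le (hopen.measure_pos _ ⟨y, hmem⟩) (MeasureTheory.measure_mono hsub)
    have hnn : 0 ≤ᵐ[MeasureTheory.volume.restrict (Set.uIoc a b)] f := by
      rw [Set.uIoc_of_le hab.le]
      filter_upwards [MeasureTheory.ae_restrict_mem measurableSet_Ioc] with z hz
      exact hf z (ha.trans hz.1)
    have : 0 < ∫ x in a..b, f x :=
      (intervalIntegral.integral_pos_iff_support_of_nonneg_ae' hnn
        (hfc.intervalIntegrable a b)).2 ⟨hab, hmeas⟩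
    exact absurd hint (ne_of_gt this)
  have hclos : Set.EqOn f 0 (closure (Set.Ioo a b)) :=
    (Set.EqOn.closure (fun y hy => hIoo y hy) hfc continuous_const)
  intro y hy
  have := hclos (by rwa [closure_Ioo hab.ne])
  simpa using this

private lemma key_zero (f : ℝ → ℝ) (hfc : Continuous f) (hf : ∀ s : ℝ, 0 < s → 0 ≤ f s)
    (F : ℝ → ℝ) (hF : ∀ s : ℝ, F s = ∫ σ in (0 : ℝ)..s, f σ)
    (a b : ℝ) (ha : 0 < a) (hb : 0 < b) (hab : a ≤ b) (hFle : F b ≤ F a) :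
    f b = f a := by
  rcases eq_or_lt_of_le hab with rfl | hlt
  · rfl
  have hadd : (∫ x in (0:ℝ)..a, f x) + ∫ x in a..b, f x = ∫ x in (0:ℝ)..b, f x :=
    intervalIntegral.integral_add_adjacent_intervals (hfc.intervalIntegrable 0 a)
      (hfc.intervalIntegrable a b)
  have hval : (∫ x in a..b, f x) = F b - F a := by
    rw [hF a, hF b]; linarith
  have hnn : 0 ≤ ∫ x in a..b, f x := by
    apply intervalIntegral.integral_nonneg hab
    intro z hz; exact hf z (lt_of_lt_of_le ha hz.1)
  have hzero : (∫ x in a..b, f x) = 0 := le_antisymm (by rw [hval]; linarith) hnn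
  have h0 := aux_zero f hfc hf a b ha hlt hzero
  rw [h0 a ⟨le_refl a, hab⟩, h0 b ⟨hab, le_refl b⟩]

/-- if polarization leaves `F ∘ u` unchanged, then `f (u^H) = f (u)`. -/
theorem stmt16 (N : ℕ) (hN : 1 ≤ N)
    (f : ℝ → ℝ) (hfc : Continuous f) (hf : ∀ s : ℝ, 0 < s → 0 ≤ f s)
    (F : ℝ → ℝ) (hF : ∀ s : ℝ, F s = ∫ σ in (0 : ℝ)..s, f σ)
    (u : EuclideanSpace ℝ (Fin N) → ℝ) (hu : ∀ x, 0 < u x)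
    -- the closed half-space `H = {x : ⟪x, e⟫ ≤ c}` and the reflection `σ` across `∂H`
    (e : EuclideanSpace ℝ (Fin N)) (he : ‖e‖ = 1) (c : ℝ)
    (σH : EuclideanSpace ℝ (Fin N) → EuclideanSpace ℝ (Fin N))
    (hσ : ∀ x, σH x = x + (2 * (c - (inner ℝ x e : ℝ))) • e)
    (uH : EuclideanSpace ℝ (Fin N) → ℝ)
    (huH : ∀ x, uH x =
      if (inner ℝ x e : ℝ) ≤ c then max (u x) (u (σH x)) else min (u x) (u (σH x)))
    -- hypothesis: the polarization of `F ∘ u` coincides with `F ∘ u`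
    (hfix : ∀ x, (if (inner ℝ x e : ℝ) ≤ c then max (F (u x)) (F (u (σH x)))
        else min (F (u x)) (F (u (σH x)))) = F (u x)) :
    ∀ x, f (uH x) = f (u x) := by
  intro x
  have hfx := hfix x
  rw [huH x]
  set a := u x with ha
  set b := u (σH x) with hb
  by_cases h : (inner ℝ x e : ℝ) ≤ c
  · rw [if_pos h] at hfx ⊢
    have hFba : F b ≤ F a := by
      rw [max_eq_left_iff] at hfx; exact hfx
    rcases le_total b a with hba | hab
    · rw [max_eq_left hba]
    · rw [max_eq_right hab]
      exact key_zero f hfc hf F hF a b (hu x) (hu (σH x)) hab hFba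
  · rw [if_neg h] at hfx ⊢
    have hFab : F a ≤ F b := by
      rw [min_eq_left_iff] at hfx; exact hfx
    rcases le_total a b with hab | hba
    · rw [min_eq_left hab]
    · rw [min_eq_right hba]
      exact (key_zero f hfc hf F hF b a (hu (σH x)) (hu x) hba hFab).symm
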